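/- Let b₁, b₂, b₃ > 0 and let G ∈ ℝ^{3×3} have vanishing third column. Then the function c = (c₁,c₂,c₃) ↦ b₁‖sym(G + c eᵀ₃)‖² + b₂‖skew(G + c eᵀ₃)‖² + b₃ (tr(G + c eᵀ₃))² has a unique global minimizer over ℝ³, given by c* = ( ((b₂−b₁)/(b₁+b₂)) G₃₁, ((b₂−b₁)/(b₁+b₂)) G₃₂, −(b₃/(b₁+b₃)) (G₁₁ + G₂₂) ). -/
import Mathlib


open Matrix

noncomputable section

/-- Symmetric part of a matrix. -/
def msym {n : ℕ} (X : Matrix (Fin n) (Fin n) ℝ) : Matrix (Fin n) (Fin n) ℝ :=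
  (1 / 2 : ℝ) • (X + Xᵀ)

/-- Skew-symmetric part of a matrix. -/
def mskew {n : ℕ} (X : Matrix (Fin n) (Fin n) ℝ) : Matrix (Fin n) (Fin n) ℝ :=
  (1 / 2 : ℝ) • (X - Xᵀ)

/-- Squared Frobenius norm `‖X‖² = tr(XᵀX)`. -/
def mnormSq {n : ℕ} (X : Matrix (Fin n) (Fin n) ℝ) : ℝ :=
  Matrix.trace (Xᵀ * X)

/-- The curvature energy as a function of the third column `c`. -/
def fcurv (b₁ b₂ b₃ : ℝ) (G : Matrix (Fin 3) (Fin 3) ℝ) (c : Fin 3 → ℝ) : ℝ :=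
  b₁ * mnormSq (msym (G + vecMulVec c (Pi.single 2 1)))
    + b₂ * mnormSq (mskew (G + vecMulVec c (Pi.single 2 1)))
    + b₃ * (Matrix.trace (G + vecMulVec c (Pi.single 2 1))) ^ 2

set_option maxHeartbeats 1000000 in
lemma fcurv_sub (b₁ b₂ b₃ : ℝ) (G : Matrix (Fin 3) (Fin 3) ℝ) (hG : ∀ i, G i 2 = 0)
    (c c' : Fin 3 → ℝ) :
    fcurv b₁ b₂ b₃ G c - fcurv b₁ b₂ b₃ G c' =
      ((b₁ + b₂) / 2) * ((c 0) ^ 2 - (c' 0) ^ 2 + (c 1) ^ 2 - (c' 1) ^ 2)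
      + (b₁ - b₂) * (G 2 0 * (c 0 - c' 0) + G 2 1 * (c 1 - c' 1))
      + (b₁ + b₃) * ((c 2) ^ 2 - (c' 2) ^ 2)
      + 2 * b₃ * (G 0 0 + G 1 1) * (c 2 - c' 2) := by
  simp only [fcurv, mnormSq, msym, mskew, Matrix.trace, Matrix.diag, Matrix.mul_apply,
    Fin.sum_univ_three, Matrix.add_apply, Matrix.smul_apply, Matrix.transpose_apply,
    Matrix.sub_apply, vecMulVec_apply, Pi.single_apply, hG, smul_eq_mul,
    Fin.reduceEq, reduceIte, mul_zero, zero_mul, add_zero, zero_add, mul_one]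
  ring

lemma scalar_key (b₁ b₂ b₃ u v t x y z : ℝ) (h12 : b₁ + b₂ ≠ 0) (h13 : b₁ + b₃ ≠ 0) :
    ((b₁ + b₂) / 2) * (x ^ 2 - (((b₂ - b₁) / (b₁ + b₂)) * u) ^ 2
        + y ^ 2 - (((b₂ - b₁) / (b₁ + b₂)) * v) ^ 2)
      + (b₁ - b₂) * (u * (x - ((b₂ - b₁) / (b₁ + b₂)) * u)
        + v * (y - ((b₂ - b₁) / (b₁ + b₂)) * v))
      + (b₁ + b₃) * (z ^ 2 - (-(b₃ / (b₁ + b₃)) * t) ^ 2)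
      + 2 * b₃ * t * (z - -(b₃ / (b₁ + b₃)) * t)
    = ((b₁ + b₂) / 2) * ((x - ((b₂ - b₁) / (b₁ + b₂)) * u) ^ 2
        + (y - ((b₂ - b₁) / (b₁ + b₂)) * v) ^ 2)
      + (b₁ + b₃) * (z - -(b₃ / (b₁ + b₃)) * t) ^ 2 := by
  field_simp
  ring

theorem stmt_10 (b₁ b₂ b₃ : ℝ) (hb₁ : 0 < b₁) (hb₂ : 0 < b₂) (hb₃ : 0 < b₃)
    (G : Matrix (Fin 3) (Fin 3) ℝ) (hG : ∀ i, G i 2 = 0) :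
    (∀ c : Fin 3 → ℝ,
        fcurv b₁ b₂ b₃ G
          ![((b₂ - b₁) / (b₁ + b₂)) * G 2 0,
            ((b₂ - b₁) / (b₁ + b₂)) * G 2 1,
            -(b₃ / (b₁ + b₃)) * (G 0 0 + G 1 1)] ≤ fcurv b₁ b₂ b₃ G c) ∧
    (∀ c : Fin 3 → ℝ,
        fcurv b₁ b₂ b₃ G c
            = fcurv b₁ b₂ b₃ G
                ![((b₂ - b₁) / (b₁ + b₂)) * G 2 0,
                  ((b₂ - b₁) / (b₁ + b₂)) * G 2 1,
                  -(b₃ / (b₁ + b₃)) * (G 0 0 + G 1 1)] →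
          c = ![((b₂ - b₁) / (b₁ + b₂)) * G 2 0,
                ((b₂ - b₁) / (b₁ + b₂)) * G 2 1,
                -(b₃ / (b₁ + b₃)) * (G 0 0 + G 1 1)]) := by
  have h12 : b₁ + b₂ ≠ 0 := by positivity
  have h13 : b₁ + b₃ ≠ 0 := by positivity
  set cs : Fin 3 → ℝ :=
    ![((b₂ - b₁) / (b₁ + b₂)) * G 2 0,
      ((b₂ - b₁) / (b₁ + b₂)) * G 2 1,
      -(b₃ / (b₁ + b₃)) * (G 0 0 + G 1 1)] with hcs
  have hcs0 : cs 0 = ((b₂ - b₁) / (b₁ + b₂)) * G 2 0 := rfl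
  have hcs1 : cs 1 = ((b₂ - b₁) / (b₁ + b₂)) * G 2 1 := rfl
  have hcs2 : cs 2 = -(b₃ / (b₁ + b₃)) * (G 0 0 + G 1 1) := rfl
  have key : ∀ c : Fin 3 → ℝ, fcurv b₁ b₂ b₃ G c - fcurv b₁ b₂ b₃ G cs =
      ((b₁ + b₂) / 2) * ((c 0 - cs 0) ^ 2 + (c 1 - cs 1) ^ 2)
        + (b₁ + b₃) * (c 2 - cs 2) ^ 2 := by
    intro c
    rw [fcurv_sub b₁ b₂ b₃ G hG c cs, hcs0, hcs1, hcs2]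
    exact scalar_key b₁ b₂ b₃ (G 2 0) (G 2 1) (G 0 0 + G 1 1) (c 0) (c 1) (c 2) h12 h13
  constructor
  · intro c
    have := key c
    nlinarith [sq_nonneg (c 0 - cs 0), sq_nonneg (c 1 - cs 1), sq_nonneg (c 2 - cs 2)]
  · intro c hc
    have hk := key c
    rw [hc, sub_self] at hk
    have q0 : (c 0 - cs 0) ^ 2 = 0 := le_antisymm (by nlinarith [sq_nonneg (c 1 - cs 1), sq_nonneg (c 2 - cs 2)]) (sq_nonneg _)
    have q1 : (c 1 - cs 1) ^ 2 = 0 := le_antisymm (by nlinarith [sq_nonneg (c 0 - cs 0), sq_nonneg (c 2 - cs 2)]) (sq_nonneg _)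
    have q2 : (c 2 - cs 2) ^ 2 = 0 := le_antisymm (by nlinarith [sq_nonneg (c 0 - cs 0), sq_nonneg (c 1 - cs 1)]) (sq_nonneg _)
    have h0 : c 0 = cs 0 := by have := pow_eq_zero_iff (n := 2) (by norm_num) |>.mp q0; linarith
    have h1 : c 1 = cs 1 := by have := pow_eq_zero_iff (n := 2) (by norm_num) |>.mp q1; linarith
    have h2 : c 2 = cs 2 := by have := pow_eq_zero_iff (n := 2) (by norm_num) |>.mp q2; linarith
    funext i
    fin_cases i <;> assumption
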